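/- arXiv:2207.06770 — 2 statements merged into one kernel-verified Lean document; each statement's English description precedes it below -/
import Mathlib

section
/- Let g : S¹ → ℂ be a continuous injective map from the unit circle S¹ = {z ∈ ℂ : |z| = 1} whose range γ := g(S¹) is not a circle (there exist no c ∈ ℂ, R > 0 with γ = {z ∈ ℂ : |z − c| = R}). Then there exists δ > 0 such that for every a ∈ ℂ, (sup_{w ∈ γ} |a − w|) − (inf_{w ∈ γ} |a − w|) ≥ δ. -/
open Complex Metric Set Function Real

lemma csSup_image_le_aux {s : Set ℂ} (hs : s.Nonempty) {f f' : ℂ → ℝ} {ε : ℝ}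
    (hbdd : BddAbove (f' '' s)) (h : ∀ x ∈ s, f x ≤ f' x + ε) :
    sSup (f '' s) ≤ sSup (f' '' s) + ε := by
  refine csSup_le (hs.image f) ?_
  rintro y ⟨x, hx, rfl⟩
  exact (h x hx).trans (add_le_add_left (le_csSup hbdd ⟨x, hx, rfl⟩) ε)

lemma csInf_image_le_aux {s : Set ℂ} (hs : s.Nonempty) {f f' : ℂ → ℝ} {ε : ℝ}
    (hbdd : BddBelow (f' '' s)) (h : ∀ x ∈ s, f' x ≤ f x + ε) :
    sInf (f' '' s) ≤ sInf (f '' s) + ε := by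
  have h2 : sInf (f' '' s) - ε ≤ sInf (f '' s) := by
    refine le_csInf (hs.image f) ?_
    rintro y ⟨x, hx, rfl⟩
    have h3 := csInf_le hbdd (⟨x, hx, rfl⟩ : f' x ∈ f' '' s)
    linarith [h x hx]
  linarith

lemma csSup_image_eq_of_isMaxOn {s : Set ℂ} (hs : s.Nonempty) {f : ℂ → ℝ} {x₁ : ℂ}
    (hx₁ : x₁ ∈ s) (hmax : IsMaxOn f s x₁) : sSup (f '' s) = f x₁ := by
  refine le_antisymm (csSup_le (hs.image f) ?_) (le_csSup ⟨f x₁, ?_⟩ ⟨x₁, hx₁, rfl⟩)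
  · rintro y ⟨x, hx, rfl⟩; exact hmax hx
  · rintro y ⟨x, hx, rfl⟩; exact hmax hx

lemma csInf_image_eq_of_isMinOn {s : Set ℂ} (hs : s.Nonempty) {f : ℂ → ℝ} {x₀ : ℂ}
    (hx₀ : x₀ ∈ s) (hmin : IsMinOn f s x₀) : sInf (f '' s) = f x₀ := by
  refine le_antisymm (csInf_le ⟨f x₀, ?_⟩ ⟨x₀, hx₀, rfl⟩) (le_csInf (hs.image f) ?_)
  · rintro y ⟨x, hx, rfl⟩; exact hmin hx
  · rintro y ⟨x, hx, rfl⟩; exact hmin hx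

lemma unit_mem_slitPlane {w : ℂ} (hw : ‖w‖ = 1) (hw1 : w ≠ -1) :
    w ∈ Complex.slitPlane := by
  rw [Complex.mem_slitPlane_iff]
  by_contra hc
  push_neg at hc
  obtain ⟨hre, him⟩ := hc
  have hsq : w.re ^ 2 + w.im ^ 2 = 1 := by
    have h1 : Complex.normSq w = 1 := by
      rw [← Complex.sq_norm, hw]; norm_num
    rw [Complex.normSq_apply] at h1
    nlinarith
  rw [him] at hsq
  have hre' : w.re = -1 := by nlinarith
  exact hw1 (Complex.ext (by simpa using hre') (by simpa using him))

lemma sphere_diff_singleton_connected {q : ℂ} (hq : q ∈ sphere (0:ℂ) 1) :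
    IsConnected (sphere (0:ℂ) 1 \ {q}) := by
  have hq1 : ‖q‖ = 1 := by simpa using mem_sphere_zero_iff_norm.mp hq
  have hq0 : q ≠ 0 := by intro h; rw [h] at hq1; simp at hq1
  have hset : sphere (0:ℂ) 1 \ {q} = (fun θ : ℝ => q * Complex.exp (θ * I)) '' Ioo 0 (2*π) := by
    ext z
    constructor
    · rintro ⟨hz, hzq⟩
      have hz1 : ‖z‖ = 1 := by
        simpa using mem_sphere_zero_iff_norm.mp hz
      have hzq' : z ≠ q := by simpa using hzq
      set w := z / q with hw
      have hw1 : ‖w‖ = 1 := by simp [hw, norm_div, hz1, hq1]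
      have hwne : w ≠ 1 := fun h => hzq' (by rwa [hw, div_eq_one_iff_eq hq0] at h)
      have hkey : q * Complex.exp (w.arg * I) = z := by
        have h2 := Complex.norm_mul_exp_arg_mul_I w
        rw [hw1] at h2
        simp only [ofReal_one, one_mul] at h2
        rw [h2, hw, mul_div_cancel₀ _ hq0]
      have harg_ne : w.arg ≠ 0 := by
        intro h
        have h2 := Complex.norm_mul_exp_arg_mul_I w
        rw [hw1, h] at h2
        apply hwne
        rw [h2.symm]
        simp
      rcases lt_or_gt_of_ne harg_ne with hneg | hpos
      · refine ⟨w.arg + 2*π, ⟨by linarith [Complex.neg_pi_lt_arg w, Real.pi_pos], by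
          linarith [Complex.arg_le_pi w, Real.pi_pos]⟩, ?_⟩
        show q * Complex.exp (((w.arg + 2*π : ℝ) : ℂ) * I) = z
        push_cast
        rw [add_mul, Complex.exp_add]
        rw [show ((2:ℂ)*(π:ℂ)*I) = 2*(π:ℂ)*I from rfl, Complex.exp_two_pi_mul_I, mul_one]
        exact hkey
      · exact ⟨w.arg, ⟨hpos, by linarith [Complex.arg_le_pi w, Real.pi_pos]⟩, hkey⟩
    · rintro ⟨θ, ⟨hθ0, hθ2⟩, rfl⟩
      constructor
      · rw [mem_sphere_zero_iff_norm]
        simp [norm_mul, hq1, Complex.norm_exp]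
      · simp only [mem_singleton_iff]
        intro h
        have hexp : Complex.exp (θ * I) = 1 := by
          have h' : q * Complex.exp (θ * I) = q * 1 := by rw [h, mul_one]
          exact mul_left_cancel₀ hq0 h'
        rw [Complex.exp_eq_one_iff] at hexp
        obtain ⟨n, hn⟩ := hexp
        have hI : (I:ℂ) ≠ 0 := I_ne_zero
        have hθn : (θ:ℂ) = (n:ℂ) * (2*(π:ℂ)) := by
          have := mul_right_cancel₀ hI (by rw [hn]; ring_nf : (θ:ℂ) * I = ((n:ℂ) * (2*(π:ℂ))) * I)
          exact this
        have hθn' : θ = n * (2*π) := by exact_mod_cast hθn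
        rcases le_or_gt n 0 with h0 | h0
        · have hn0 : (n:ℝ) ≤ 0 := by exact_mod_cast h0
          nlinarith [Real.pi_pos]
        · have h1 : (1:ℝ) ≤ (n:ℝ) := by exact_mod_cast h0
          nlinarith [Real.pi_pos]
  rw [hset]
  exact (isConnected_Ioo (by positivity : (0:ℝ) < 2*π)).image _ (by fun_prop)

lemma no_real_embedding (g : ℂ → ℂ) (hg : ContinuousOn g (sphere (0:ℂ) 1))
    (hinj : InjOn g (sphere (0:ℂ) 1)) (h : ℂ → ℝ)
    (hh : ContinuousOn h (g '' sphere (0:ℂ) 1))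
    (hhi : InjOn h (g '' sphere (0:ℂ) 1)) : False := by
  set S := sphere (0:ℂ) 1 with hS
  set K := g '' S with hKdef
  have hScpt : IsCompact S := isCompact_sphere 0 1
  have hKcpt : IsCompact K := hScpt.image_of_continuousOn hg
  have h1S : (1:ℂ) ∈ S := by simp [hS]
  have hm1S : (-1:ℂ) ∈ S := by simp [hS]
  have hIS : (I:ℂ) ∈ S := by simp [hS]
  have hKne : K.Nonempty := ⟨g 1, 1, h1S, rfl⟩
  obtain ⟨pM, hpM, hpMmax⟩ := hKcpt.exists_isMaxOn hKne hh
  obtain ⟨pm, hpm, hpmmin⟩ := hKcpt.exists_isMinOn hKne hh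
  obtain ⟨b', hb'S, hb'⟩ := hpM
  obtain ⟨a', ha'S, ha'⟩ := hpm
  -- pick q on the sphere distinct from a' and b'
  obtain ⟨q, hqS, hqa, hqb⟩ : ∃ q ∈ S, q ≠ a' ∧ q ≠ b' := by
    by_cases h1 : a' ≠ 1 ∧ b' ≠ 1
    · exact ⟨1, h1S, Ne.symm h1.1, Ne.symm h1.2⟩
    by_cases h2 : a' ≠ -1 ∧ b' ≠ -1
    · exact ⟨-1, hm1S, Ne.symm h2.1, Ne.symm h2.2⟩
    have h1' : a' = 1 ∨ b' = 1 := by by_contra hc; push_neg at hc; exact h1 hc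
    have h2' : a' = -1 ∨ b' = -1 := by by_contra hc; push_neg at hc; exact h2 hc
    have hI1 : (I:ℂ) ≠ 1 := (by intro hcon; rw [Complex.ext_iff] at hcon; norm_num at hcon)
    have hIm1 : (I:ℂ) ≠ -1 := by
      intro hcon; rw [Complex.ext_iff] at hcon; norm_num at hcon
    refine ⟨I, hIS, ?_, ?_⟩
    · rintro rfl
      rcases h1' with h | h
      · exact hI1 h
      · rcases h2' with h' | h'
        · exact hIm1 h'
        · rw [h'] at h; norm_num at h
    · rintro rfl
      rcases h1' with h | h
      · rcases h2' with h' | h'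
        · rw [h'] at h; norm_num at h
        · exact hIm1 h'
      · exact hI1 h
  have hC : IsConnected (g '' (S \ {q})) :=
    (sphere_diff_singleton_connected hqS).image g (hg.mono diff_subset)
  have hCsub : g '' (S \ {q}) ⊆ K := image_mono diff_subset
  have hhC : IsConnected (h '' (g '' (S \ {q}))) := hC.image h (hh.mono hCsub)
  have hOrd : OrdConnected (h '' (g '' (S \ {q}))) := hhC.isPreconnected.ordConnected
  have hpmC : pm ∈ g '' (S \ {q}) := ⟨a', ⟨ha'S, fun hx => hqa (by simpa using hx.symm)⟩, ha'⟩
  have hpMC : pM ∈ g '' (S \ {q}) := ⟨b', ⟨hb'S, fun hx => hqb (by simpa using hx.symm)⟩, hb'⟩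
  have hgqK : g q ∈ K := ⟨q, hqS, rfl⟩
  have hmem : h (g q) ∈ h '' (g '' (S \ {q})) :=
    hOrd.out (mem_image_of_mem h hpmC) (mem_image_of_mem h hpMC)
      ⟨hpmmin hgqK, hpMmax hgqK⟩
  obtain ⟨c, hcC, hc⟩ := hmem
  have hceq : c = g q := hhi (hCsub hcC) hgqK hc
  obtain ⟨s, hs, hsc⟩ := hcC
  exact hs.2 (by simpa using hinj hs.1 hqS (by rw [hsc, hceq]))

lemma gap_pos_pointwise (g : ℂ → ℂ) (hg : ContinuousOn g (sphere (0:ℂ) 1))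
    (hinj : InjOn g (sphere (0:ℂ) 1))
    (hnotcircle : ¬ ∃ (c : ℂ) (R : ℝ), 0 < R ∧
      g '' sphere (0:ℂ) 1 = {z : ℂ | ‖z - c‖ = R}) (a : ℂ) :
    0 < sSup ((fun w => ‖a - w‖) '' (g '' sphere (0:ℂ) 1))
        - sInf ((fun w => ‖a - w‖) '' (g '' sphere (0:ℂ) 1)) := by
  set K := g '' sphere (0:ℂ) 1 with hK
  have hKcpt : IsCompact K := (isCompact_sphere 0 1).image_of_continuousOn hg
  have hfc : Continuous fun w => ‖a - w‖ :=
    continuous_norm.comp (continuous_const.sub continuous_id)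
  have himc : IsCompact ((fun w => ‖a - w‖) '' K) := hKcpt.image hfc
  have h1S : (1:ℂ) ∈ sphere (0:ℂ) 1 := by simp
  have hm1S : (-1:ℂ) ∈ sphere (0:ℂ) 1 := by simp
  have hg1 : g 1 ∈ K := ⟨1, h1S, rfl⟩
  have hgm1 : g (-1) ∈ K := ⟨-1, hm1S, rfl⟩
  have hKne : K.Nonempty := ⟨g 1, hg1⟩
  have hbddA := himc.bddAbove
  have hbddB := himc.bddBelow
  have hle : sInf ((fun w => ‖a - w‖) '' K)
      ≤ sSup ((fun w => ‖a - w‖) '' K) :=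
    le_trans (csInf_le hbddB ⟨g 1, hg1, rfl⟩) (le_csSup hbddA ⟨g 1, hg1, rfl⟩)
  by_contra hc
  push_neg at hc
  have heq : sSup ((fun w => ‖a - w‖) '' K)
      = sInf ((fun w => ‖a - w‖) '' K) := le_antisymm (by linarith) hle
  set r := sInf ((fun w => ‖a - w‖) '' K) with hr
  have hall : ∀ w ∈ K, ‖a - w‖ = r := fun w hw =>
    le_antisymm (heq ▸ le_csSup hbddA ⟨w, hw, rfl⟩) (csInf_le hbddB ⟨w, hw, rfl⟩)
  have hgne : g 1 ≠ g (-1) := fun h =>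
    (by norm_num : (1:ℂ) ≠ -1) (hinj h1S hm1S h)
  have hr0 : 0 < r := by
    rcases lt_or_ge 0 r with h | h
    · exact h
    have h1 : ‖a - g 1‖ = r := hall _ hg1
    have h0 : r = 0 := le_antisymm h (h1 ▸ norm_nonneg _)
    rw [h0] at h1
    have h2 : ‖a - g (-1)‖ = 0 := by rw [hall _ hgm1, h0]
    rw [norm_eq_zero, sub_eq_zero] at h1 h2
    exact absurd (h1.symm.trans h2) hgne
  have hsub : K ⊆ {z : ℂ | ‖z - a‖ = r} := fun w hw => by
    simpa [norm_sub_rev] using hall w hw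
  have hne_set : K ≠ {z : ℂ | ‖z - a‖ = r} := fun h =>
    hnotcircle ⟨a, r, hr0, h⟩
  obtain ⟨z₀, hz₀mem, hz₀K⟩ := Set.exists_of_ssubset (hsub.ssubset_of_ne hne_set)
  have hz₀r : ‖a - z₀‖ = r := by
    rw [norm_sub_rev]; exact hz₀mem
  have hden : a - z₀ ≠ 0 := fun h => by
    rw [h, norm_zero] at hz₀r; exact absurd hz₀r.symm (hr0.ne')
  set h : ℂ → ℝ := fun z => ((z - a)/(a - z₀)).arg with hhdef
  have hu : ∀ z ∈ K, ‖(z - a)/(a - z₀)‖ = 1 := fun z hz => by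
    rw [norm_div, norm_sub_rev z a, hall z hz, hz₀r, div_self (ne_of_gt hr0)]
  have hne1 : ∀ z ∈ K, (z - a)/(a - z₀) ≠ -1 := fun z hz hcon => by
    have : z - a = -(a - z₀) := by
      field_simp at hcon; linear_combination hcon
    have hz' : z = z₀ := by linear_combination this
    exact hz₀K (hz' ▸ hz)
  have hh : ContinuousOn h K := by
    intro z hz
    have hc1 : ContinuousAt (fun w : ℂ => (w - a)/(a - z₀)) z := by fun_prop
    have hc2 : ContinuousAt Complex.arg ((z - a)/(a - z₀)) :=
      Complex.continuousAt_arg (unit_mem_slitPlane (hu z hz) (hne1 z hz))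
    have hc3 : ContinuousAt h z := Filter.Tendsto.comp hc2 hc1
    exact hc3.continuousWithinAt
  have hhi : InjOn h K := by
    intro z hz z' hz' heq'
    have habs : ‖(z - a)/(a - z₀)‖ = ‖(z' - a)/(a - z₀)‖ := by
      rw [hu z hz, hu z' hz']
    have hzz := Complex.ext_norm_arg habs heq'
    field_simp at hzz
    linear_combination hzz
  exact no_real_embedding g hg hinj h hh hhi

/-- Positivity of the gap function: if the Jordan curve `γ = g(S¹)` is not a circle,
then there is `δ > 0` such that for every `a ∈ ℂ` the difference between the supremum
and the infimum of `|a − w|` over `w ∈ γ` is at least `δ`. -/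
theorem gap_function_positive (g : ℂ → ℂ)
    (hg : ContinuousOn g (sphere (0:ℂ) 1))
    (hinj : InjOn g (sphere (0:ℂ) 1))
    (hnotcircle : ¬ ∃ (c : ℂ) (R : ℝ), 0 < R ∧
      g '' sphere (0:ℂ) 1 = {z : ℂ | ‖z - c‖ = R}) :
    ∃ δ : ℝ, 0 < δ ∧ ∀ a : ℂ,
      δ ≤ sSup ((fun w => ‖a - w‖) '' (g '' sphere (0:ℂ) 1))
          - sInf ((fun w => ‖a - w‖) '' (g '' sphere (0:ℂ) 1)) := by
  classical
  set K := g '' sphere (0:ℂ) 1 with hK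
  have hKcpt : IsCompact K := (isCompact_sphere 0 1).image_of_continuousOn hg
  have h1S : (1:ℂ) ∈ sphere (0:ℂ) 1 := by simp
  have hKne : K.Nonempty := ⟨g 1, 1, h1S, rfl⟩
  -- a bound on K
  obtain ⟨M₀, hM₀⟩ := (Metric.isBounded_iff_subset_closedBall 0).mp hKcpt.isBounded
  set M := max M₀ 1 with hM
  have hM1 : (1:ℝ) ≤ M := le_max_right _ _
  have hM0 : (0:ℝ) < M := by linarith
  have hbound : ∀ w ∈ K, ‖w‖ ≤ M := by
    intro w hw
    have h1 := hM₀ hw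
    rw [mem_closedBall, Complex.dist_eq, sub_zero] at h1
    exact h1.trans (le_max_left _ _)
  -- the gap function F
  set F : ℂ → ℝ := fun a => sSup ((fun w => ‖a - w‖) '' K)
      - sInf ((fun w => ‖a - w‖) '' K) with hF
  have hcompact_im : ∀ a : ℂ, IsCompact ((fun w => ‖a - w‖) '' K) := fun a =>
    hKcpt.image (continuous_norm.comp (continuous_const.sub continuous_id))
  have hbddA : ∀ a : ℂ, BddAbove ((fun w => ‖a - w‖) '' K) := fun a =>
    (hcompact_im a).bddAbove
  have hbddB : ∀ a : ℂ, BddBelow ((fun w => ‖a - w‖) '' K) := fun a =>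
    (hcompact_im a).bddBelow
  -- F is Lipschitz hence continuous
  have hFcont : Continuous F := by
    refine LipschitzWith.continuous (K := 2) (LipschitzWith.of_dist_le_mul ?_)
    intro x y
    rw [Real.dist_eq, abs_sub_le_iff]
    have key : ∀ p q : ℂ, F p - F q ≤ 2 * dist p q := by
      intro p q
      have h1 : sSup ((fun w => ‖p - w‖) '' K)
          ≤ sSup ((fun w => ‖q - w‖) '' K) + dist p q := by
        refine csSup_image_le_aux hKne (hbddA q) ?_
        intro w hw
        rw [Complex.dist_eq]
        calc ‖p - w‖ = ‖(q - w) + (p - q)‖ := by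
              rw [show (q - w) + (p - q) = p - w by ring]
          _ ≤ ‖q - w‖ + ‖p - q‖ := norm_add_le _ _
      have h2 : sInf ((fun w => ‖q - w‖) '' K)
          ≤ sInf ((fun w => ‖p - w‖) '' K) + dist p q := by
        refine csInf_image_le_aux hKne (hbddB q) ?_
        intro w hw
        rw [Complex.dist_eq]
        calc ‖q - w‖ = ‖(p - w) + (q - p)‖ := by
              rw [show (p - w) + (q - p) = q - w by ring]
          _ ≤ ‖p - w‖ + ‖q - p‖ := norm_add_le _ _
          _ = ‖p - w‖ + ‖p - q‖ := by rw [norm_sub_rev q p]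
      simp only [hF]
      linarith
    have k1 := key x y
    have k2 := key y x
    rw [dist_comm y x] at k2
    constructor <;> [skip; skip] <;> push_cast <;> linarith
  -- the width function W
  set φ : ℂ → ℂ → ℝ := fun u w => ((starRingEnd ℂ) u * w).re with hφ
  have hφcont : ∀ u : ℂ, Continuous (φ u) :=
    fun u => Complex.continuous_re.comp (continuous_const.mul continuous_id)
  have hφcompact : ∀ u : ℂ, IsCompact (φ u '' K) := fun u => hKcpt.image (hφcont u)
  set W : ℂ → ℝ := fun u => sSup (φ u '' K) - sInf (φ u '' K) with hW
  have hWcont : Continuous W := by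
    refine LipschitzWith.continuous (K := (2*M).toNNReal) (LipschitzWith.of_dist_le_mul ?_)
    intro x y
    rw [Real.dist_eq, abs_sub_le_iff]
    have hcoe : ((2*M).toNNReal : ℝ) = 2*M := Real.coe_toNNReal _ (by positivity)
    have key : ∀ p q : ℂ, W p - W q ≤ 2 * M * dist p q := by
      intro p q
      have hpoint : ∀ w ∈ K, ∀ p q : ℂ, φ p w ≤ φ q w + M * dist p q := by
        intro w hw p q
        have h0 : φ p w - φ q w = (((starRingEnd ℂ) p - (starRingEnd ℂ) q) * w).re := by
          simp [hφ, sub_mul]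
        have h1 : (((starRingEnd ℂ) p - (starRingEnd ℂ) q) * w).re
            ≤ ‖((starRingEnd ℂ) p - (starRingEnd ℂ) q) * w‖ :=
          Complex.re_le_norm _
        have h2 : ‖((starRingEnd ℂ) p - (starRingEnd ℂ) q) * w‖
            = ‖p - q‖ * ‖w‖ := by
          rw [norm_mul, ← map_sub, Complex.norm_conj]
        have h3 : ‖p - q‖ * ‖w‖ ≤ ‖p - q‖ * M :=
          mul_le_mul_of_nonneg_left (hbound w hw) (norm_nonneg _)
        rw [Complex.dist_eq]
        nlinarith [norm_nonneg (p - q)]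
      have h1 : sSup (φ p '' K) ≤ sSup (φ q '' K) + M * dist p q :=
        csSup_image_le_aux hKne (hφcompact q).bddAbove (fun w hw => hpoint w hw p q)
      have h2 : sInf (φ q '' K) ≤ sInf (φ p '' K) + M * dist p q :=
        csInf_image_le_aux hKne (hφcompact q).bddBelow (fun w hw => by simpa [dist_comm p q] using hpoint w hw q p)
      simp only [hW]
      linarith
    have k1 := key x y
    have k2 := key y x
    rw [dist_comm y x] at k2
    rw [hcoe]
    constructor <;> linarith
  -- W is positive on the unit sphere
  have hWpos : ∀ u ∈ sphere (0:ℂ) 1, 0 < W u := by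
    intro u huS
    have hu1 : ‖u‖ = 1 := by
      simpa using mem_sphere_zero_iff_norm.mp huS
    have hu0 : u ≠ 0 := fun h => by rw [h] at hu1; simp at hu1
    have hbA := (hφcompact u).bddAbove
    have hbB := (hφcompact u).bddBelow
    have hle : sInf (φ u '' K) ≤ sSup (φ u '' K) :=
      le_trans (csInf_le hbB ⟨g 1, ⟨1, h1S, rfl⟩, rfl⟩)
        (le_csSup hbA ⟨g 1, ⟨1, h1S, rfl⟩, rfl⟩)
    by_contra hc
    push_neg at hc
    have hc' : sSup (φ u '' K) - sInf (φ u '' K) ≤ 0 := hc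
    have heq : sSup (φ u '' K) = sInf (φ u '' K) := le_antisymm (by linarith) hle
    have hall : ∀ w ∈ K, φ u w = sInf (φ u '' K) := fun w hw =>
      le_antisymm (heq ▸ le_csSup hbA ⟨w, hw, rfl⟩) (csInf_le hbB ⟨w, hw, rfl⟩)
    refine no_real_embedding g hg hinj (fun z => ((starRingEnd ℂ) u * z).im) ?_ ?_
    · exact (Complex.continuous_im.comp (continuous_const.mul continuous_id)).continuousOn
    · intro z hz z' hz' him
      have hre : ((starRingEnd ℂ) u * z).re = ((starRingEnd ℂ) u * z').re := by
        rw [show ((starRingEnd ℂ) u * z).re = φ u z from rfl,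
          show ((starRingEnd ℂ) u * z').re = φ u z' from rfl, hall z hz, hall z' hz']
      have : (starRingEnd ℂ) u * z = (starRingEnd ℂ) u * z' := Complex.ext hre him
      exact mul_left_cancel₀ (by simpa using hu0) this
  -- minimum of W over the sphere
  obtain ⟨u₀, hu₀S, hu₀min⟩ := (isCompact_sphere (0:ℂ) 1).exists_isMinOn ⟨1, h1S⟩
    hWcont.continuousOn
  set ρ := W u₀ with hρdef
  have hρ : 0 < ρ := hWpos u₀ hu₀S
  have hρle : ∀ u ∈ sphere (0:ℂ) 1, ρ ≤ W u := fun u hu => hu₀min hu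
  -- tail bound
  set R := M + 2*M^2/ρ + 1 with hR
  have hR0 : 0 < R := by positivity
  have htail : ∀ a : ℂ, R ≤ ‖a‖ → ρ/2 ≤ F a := by
    intro a ha
    set t := ‖a‖ with ht
    have ht0 : 0 < t := lt_of_lt_of_le hR0 ha
    have htc : (t:ℂ) ≠ 0 := by exact_mod_cast ht0.ne'
    set u : ℂ := a / (t:ℂ) with hu
    have hu1 : ‖u‖ = 1 := by
      rw [hu, norm_div, Complex.norm_real, Real.norm_eq_abs, abs_of_pos ht0, div_self ht0.ne']
    have huS : u ∈ sphere (0:ℂ) 1 := by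
      rw [mem_sphere_zero_iff_norm]; exact hu1
    obtain ⟨w₁, hw₁, hw₁max⟩ := hKcpt.exists_isMaxOn hKne (hφcont u).continuousOn
    obtain ⟨w₀, hw₀, hw₀min⟩ := hKcpt.exists_isMinOn hKne (hφcont u).continuousOn
    have hWu : W u = φ u w₁ - φ u w₀ := by
      rw [show W u = sSup (φ u '' K) - sInf (φ u '' K) from rfl,
        csSup_image_eq_of_isMaxOn hKne hw₁ hw₁max, csInf_image_eq_of_isMinOn hKne hw₀ hw₀min]
    -- conj u * a = t
    have hua : (starRingEnd ℂ) u * a = ((t:ℝ):ℂ) := by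
      rw [hu, map_div₀, Complex.conj_ofReal]
      rw [div_mul_eq_mul_div, mul_comm, Complex.mul_conj, Complex.normSq_eq_norm_sq, ← ht]
      push_cast
      field_simp
    -- lower bound for sSup
    have hlow : t - φ u w₀ ≤ sSup ((fun w => ‖a - w‖) '' K) := by
      have h1 : t - φ u w₀ = ((starRingEnd ℂ) u * (a - w₀)).re := by
        rw [mul_sub, Complex.sub_re, hua]
        simp [hφ]
      have h2 : ((starRingEnd ℂ) u * (a - w₀)).re ≤ ‖(starRingEnd ℂ) u * (a - w₀)‖ :=
        Complex.re_le_norm _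
      have h3 : ‖(starRingEnd ℂ) u * (a - w₀)‖ = ‖a - w₀‖ := by
        rw [norm_mul, Complex.norm_conj, hu1, one_mul]
      have h4 : ‖a - w₀‖ ≤ sSup ((fun w => ‖a - w‖) '' K) :=
        le_csSup (hbddA a) ⟨w₀, hw₀, rfl⟩
      linarith
    -- upper bound for sInf
    set b := φ u w₁ with hb
    have hbM : |b| ≤ M := by
      have h1 : |b| ≤ ‖(starRingEnd ℂ) u * w₁‖ := Complex.abs_re_le_norm _
      have h2 : ‖(starRingEnd ℂ) u * w₁‖ = ‖w₁‖ := by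
        rw [norm_mul, Complex.norm_conj, hu1, one_mul]
      exact h1.trans (h2 ▸ hbound w₁ hw₁)
    have hbM' := abs_le.mp hbM
    have h2Mρ : 0 < 2*M^2/ρ := by positivity
    have hden : 0 < t - M := by
      rw [hR] at ha; linarith
    have hsq : (‖a - w₁‖)^2 = t^2 - 2*t*b + (‖w₁‖)^2 := by
      rw [Complex.sq_norm, Complex.normSq_sub]
      have hre : (a * (starRingEnd ℂ) w₁).re = t * b := by
        have haeq : a = ((t:ℝ):ℂ) * u := by
          rw [hu, mul_div_cancel₀ _ htc]
        rw [haeq, mul_assoc, Complex.re_ofReal_mul]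
        congr 1
        rw [hb, hφ]
        simp only []
        rw [show (starRingEnd ℂ) u * w₁ = (starRingEnd ℂ) (u * (starRingEnd ℂ) w₁) by
          rw [map_mul, Complex.conj_conj], Complex.conj_re]
      rw [hre, Complex.normSq_eq_norm_sq, Complex.normSq_eq_norm_sq, ← ht]
      ring
    have hw1M : ‖w₁‖ ≤ M := hbound w₁ hw₁
    set q' := M^2/(t-M) with hq'
    have hq'0 : 0 ≤ q' := by positivity
    have hq'eq : q' * (t - M) = M^2 := div_mul_cancel₀ _ hden.ne'
    have hs0 : 0 ≤ t - b + q' := by linarith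
    have habs_le : ‖a - w₁‖ ≤ t - b + q' := by
      rw [← pow_le_pow_iff_left₀ (norm_nonneg _) hs0 (two_ne_zero)]
      rw [hsq]
      have h5 : (t-M)*q' ≤ (t-b)*q' := mul_le_mul_of_nonneg_right (by linarith) hq'0
      nlinarith [norm_nonneg w₁]
    have hupper : sInf ((fun w => ‖a - w‖) '' K) ≤ t - b + q' :=
      (csInf_le (hbddB a) ⟨w₁, hw₁, rfl⟩).trans habs_le
    have herr : q' ≤ ρ/2 := by
      have h6 : 2*M^2/ρ ≤ t - M := by rw [hR] at ha; linarith
      have h7 : q' ≤ M^2/(2*M^2/ρ) :=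
        div_le_div_of_nonneg_left (by positivity) (by positivity) h6
      have h8 : M^2/(2*M^2/ρ) = ρ/2 := by
        field_simp
      linarith
    have hρu : ρ ≤ W u := hρle u huS
    show ρ/2 ≤ sSup ((fun w => ‖a - w‖) '' K)
        - sInf ((fun w => ‖a - w‖) '' K)
    have h9 : ρ ≤ b - φ u w₀ := by rw [hWu] at hρu; exact hρu
    have h10 : sSup ((fun w => ‖a - w‖) '' K)
        - sInf ((fun w => ‖a - w‖) '' K) ≥ (t - φ u w₀) - (t - b + q') := by
      exact sub_le_sub hlow hupper
    clear_value K M F φ W ρ t u b q'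
    calc ρ/2 = ρ - ρ/2 := by ring
      _ ≤ (b - φ u w₀) - q' := by linarith [h9, herr]
      _ = (t - φ u w₀) - (t - b + q') := by ring
      _ ≤ _ := h10
  -- conclusion
  obtain ⟨a₀, ha₀, ha₀min⟩ := (isCompact_closedBall (0:ℂ) R).exists_isMinOn
    ⟨0, mem_closedBall_self hR0.le⟩ hFcont.continuousOn
  have hFa₀ : 0 < F a₀ := gap_pos_pointwise g hg hinj hnotcircle a₀
  refine ⟨min (F a₀) (ρ/2), lt_min hFa₀ (by positivity), ?_⟩
  intro a
  by_cases hca : ‖a‖ ≤ R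
  · have hmem : a ∈ closedBall (0:ℂ) R := by
      rw [mem_closedBall, Complex.dist_eq, sub_zero]; exact hca
    exact le_trans (min_le_left _ _) (ha₀min hmem)
  · exact le_trans (min_le_right _ _) (htail a (le_of_not_ge hca))
end

section
/- Let a ∈ ℂ \ {0, 1, 3/2, 2, 3} and u ∈ ℂ \ {0}, and set b = (2a−3)/(a−2) and c = a(a−2)/(2a−3). Consider the rational map Q(z) = u z² (z − a)/(1 − b z), which is holomorphic on ℂ \ {1/b}. Then 0, 1 and c are distinct from the pole 1/b = (a−2)/(2a−3), and for every z ∈ ℂ with z ≠ 1/b one has Q'(z) = 0 if and only if z ∈ {0, 1, c}. -/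
open Complex Metric Set Function

/-- Lemma 2.4 (computation): the finite critical points of
`Q_{a,u}(z) = u z² (z−a)/(1−bz)`, `b = (2a−3)/(a−2)`, are exactly `0`, `1` and
`c = a(a−2)/(2a−3)`, all distinct from the pole `1/b = (a−2)/(2a−3)`. -/
theorem critical_points_of_Q (a u : ℂ)
    (ha : a ∉ ({0, 1, 3/2, 2, 3} : Set ℂ)) (hu : u ≠ 0)
    (b c : ℂ) (hb : b = (2*a - 3)/(a - 2)) (hc : c = a*(a - 2)/(2*a - 3))
    (Q : ℂ → ℂ) (hQ : Q = fun z => u * z ^ 2 * (z - a) / (1 - b * z)) :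
    (0 : ℂ) ≠ 1/b ∧ (1 : ℂ) ≠ 1/b ∧ c ≠ 1/b ∧ 1/b = (a - 2)/(2*a - 3) ∧
    ∀ z : ℂ, z ≠ 1/b → (deriv Q z = 0 ↔ z = 0 ∨ z = 1 ∨ z = c) := by
  simp only [mem_insert_iff, mem_singleton_iff, not_or] at ha
  obtain ⟨ha0, ha1, ha32, ha2, ha3⟩ := ha
  have h2 : a - 2 ≠ 0 := sub_ne_zero.mpr ha2
  have h3 : 2*a - 3 ≠ 0 := fun h => ha32 (by linear_combination h/2)
  have hbne : b ≠ 0 := by rw [hb]; exact div_ne_zero h3 h2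
  have hinv : 1/b = (a - 2)/(2*a - 3) := by rw [hb, one_div, inv_div]
  refine ⟨?_, ?_, ?_, hinv, ?_⟩
  · rw [hinv]; exact (div_ne_zero h2 h3).symm
  · rw [hinv]; intro h
    have h' : a - 2 = 2*a - 3 := (div_eq_one_iff_eq h3).mp h.symm
    exact ha1 (by linear_combination -h')
  · rw [hc, hinv]; intro h
    rw [div_eq_div_iff h3 h3] at h
    have : (a - 1) * ((a - 2) * (2*a - 3)) = 0 := by linear_combination h
    rcases mul_eq_zero.mp this with h' | h'
    · exact ha1 (by linear_combination h')
    · exact (mul_ne_zero h2 h3) h'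
  · intro z hz
    have hden : 1 - b * z ≠ 0 := by
      intro h
      exact hz ((eq_div_iff hbne).mpr (by linear_combination -h))
    have hd : HasDerivAt Q ((-2)*b*u*z*(z-1)*(z-c) / (1 - b*z)^2) z := by
      rw [hQ]
      have H := ((((hasDerivAt_pow 2 z).const_mul u).mul
        ((hasDerivAt_id z).sub_const a)).div
        ((hasDerivAt_const z (1:ℂ)).sub ((hasDerivAt_id z).const_mul b)) hden)
      refine H.congr_deriv ?_
      simp only [Pi.sub_apply, Pi.mul_apply, id, Nat.cast_ofNat]
      rw [hb, hc]
      have hden' : (a - 2) - (2*a - 3) * z ≠ 0 := by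
        intro h
        apply hden
        rw [hb]
        field_simp
        linear_combination h
      field_simp
      ring
    rw [hd.deriv]
    rw [div_eq_zero_iff]
    have hp : (1 - b*z)^2 ≠ 0 := pow_ne_zero _ hden
    constructor
    · rintro (h | h)
      · have h0 : ((-2)*b*u) * (z * ((z-1)*(z-c))) = 0 := by linear_combination h
        rcases mul_eq_zero.mp h0 with h' | h'
        · exact absurd h' (by
            refine mul_ne_zero (mul_ne_zero ?_ hbne) hu
            norm_num)
        · rcases mul_eq_zero.mp h' with h'' | h''
          · exact Or.inl h''
          · rcases mul_eq_zero.mp h'' with h3' | h3'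
            · exact Or.inr (Or.inl (by linear_combination h3'))
            · exact Or.inr (Or.inr (by linear_combination h3'))
      · exact absurd h hp
    · rintro (rfl | rfl | rfl) <;> left <;> ring
end
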